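/- First variation of arc length in an Alexandrov space with two variable endpoints: let γ₁, γ₂ be unit-speed geodesics starting at p and q respectively, σ₀ a shortest path from p to q which is a limit of shortest paths σ_{t_i} from γ₁(t_i) to γ₂(t_i) with t_i → 0⁺, and ℓ(t) = d(γ₁(t), γ₂(t)). Then lim_{i→∞} (ℓ(t_i) − ℓ(0))/t_i = −cos α₁ − cos α₂, where α_i is the angle made by σ₀ with γ_i. -/

import Mathlib

open Real Filter Topology

/-- The cosine of the Euclidean comparison angle at `a` of the triangle `(a,b,c)`. -/
noncomputable def compCos {X : Type*} [MetricSpace X] (a b c : X) : ℝ :=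
  (dist a b ^ 2 + dist a c ^ 2 - dist b c ^ 2) / (2 * dist a b * dist a c)

/-- The Euclidean comparison angle at `a` of the triangle `(a,b,c)`. -/
noncomputable def compAngle {X : Type*} [MetricSpace X] (a b c : X) : ℝ :=
  Real.arccos (compCos a b c)

/-- The (1+3)-point comparison condition characterizing Alexandrov spaces of
curvature bounded below (by `0`): around any point the three comparison angles
formed by any three other points sum to at most `2π`. -/
def AlexandrovCurvNonneg (X : Type*) [MetricSpace X] : Prop :=
  ∀ a b c d : X, a ≠ b → a ≠ c → a ≠ d →
    compAngle a b c + compAngle a c d + compAngle a d b ≤ 2 * π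

lemma compCos_comm {X : Type*} [MetricSpace X] (a b c : X) :
    compCos a b c = compCos a c b := by
  unfold compCos
  rw [dist_comm b c]
  ring

lemma compAngle_comm {X : Type*} [MetricSpace X] (a b c : X) :
    compAngle a b c = compAngle a c b := by
  unfold compAngle; rw [compCos_comm]

lemma compCos_mem_Icc {X : Type*} [MetricSpace X] {a b c : X} (hab : a ≠ b) (hac : a ≠ c) :
    compCos a b c ∈ Set.Icc (-1:ℝ) 1 := by
  have hx : 0 < dist a b := dist_pos.2 hab
  have hy : 0 < dist a c := dist_pos.2 hac
  have h1 : dist b c ≤ dist a b + dist a c := by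
    rw [dist_comm a b]; exact dist_triangle b a c
  have h2 : dist a c ≤ dist a b + dist b c := dist_triangle a b c
  have h3 : dist a b ≤ dist a c + dist b c := by
    rw [dist_comm b c]; exact dist_triangle a c b
  have hz : 0 ≤ dist b c := dist_nonneg
  unfold compCos
  constructor
  · rw [le_div_iff₀ (by positivity)]
    nlinarith
  · rw [div_le_one (by positivity)]
    nlinarith

lemma cos_compAngle {X : Type*} [MetricSpace X] {a b c : X} (hab : a ≠ b) (hac : a ≠ c) :
    Real.cos (compAngle a b c) = compCos a b c :=
  Real.cos_arccos (compCos_mem_Icc hab hac).1 (compCos_mem_Icc hab hac).2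

lemma dist_sq_eq_compCos {X : Type*} [MetricSpace X] {a b c : X} (hab : a ≠ b) (hac : a ≠ c) :
    dist b c ^ 2 = dist a b ^ 2 + dist a c ^ 2 - 2 * dist a b * dist a c * compCos a b c := by
  have hx : 0 < dist a b := dist_pos.2 hab
  have hy : 0 < dist a c := dist_pos.2 hac
  unfold compCos
  field_simp
  ring

/-- key estimate: `dist b c ≤ r - t cos θ + t²/(2r)` where `r = dist a b`, `t = dist a c`. -/
lemma key_est {X : Type*} [MetricSpace X] {a b c : X} (hab : a ≠ b) (hac : a ≠ c) :
    dist b c ≤ dist a b - dist a c * Real.cos (compAngle a b c)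
      + dist a c ^ 2 / (2 * dist a b) := by
  set r := dist a b with hrdef
  set t := dist a c with htdef
  set d := dist b c with hddef
  set C := compCos a b c with hCdef
  have hr : 0 < r := dist_pos.2 hab
  have ht : 0 < t := dist_pos.2 hac
  have hC := compCos_mem_Icc hab hac
  have hsq : d ^ 2 = r ^ 2 + t ^ 2 - 2 * r * t * C := by
    have := dist_sq_eq_compCos hab hac; linarith
  rw [cos_compAngle hab hac, ← hCdef]
  set u := t ^ 2 / (2 * r) with hudef
  have hu : 2 * r * u = t ^ 2 := by rw [hudef]; field_simp
  have hu0 : 0 ≤ u := by positivity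
  have hR : 0 ≤ r - t * C + u := by nlinarith [hC.1, hC.2]
  have hsqle : d ^ 2 ≤ (r - t * C + u) ^ 2 := by nlinarith [sq_nonneg (t * C - u)]
  have hd0 : (0:ℝ) ≤ d := dist_nonneg
  nlinarith [hsqle, hd0, hR, sq_nonneg (d - (r - t * C + u)), sq_nonneg (d + (r - t * C + u))]

lemma compCos_tendsto {X : Type*} [MetricSpace X] {l : Filter ℕ} {a b c : ℕ → X} {a₀ b₀ c₀ : X}
    (ha : Tendsto a l (𝓝 a₀)) (hb : Tendsto b l (𝓝 b₀)) (hc : Tendsto c l (𝓝 c₀))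
    (hab : a₀ ≠ b₀) (hac : a₀ ≠ c₀) :
    Tendsto (fun i => compCos (a i) (b i) (c i)) l (𝓝 (compCos a₀ b₀ c₀)) := by
  unfold compCos
  apply Tendsto.div
  · exact (((ha.dist hb).pow 2).add ((ha.dist hc).pow 2)).sub ((hb.dist hc).pow 2)
  · exact ((tendsto_const_nhds.mul (ha.dist hb)).mul (ha.dist hc))
  · have h1 : 0 < dist a₀ b₀ := dist_pos.2 hab
    have h2 : 0 < dist a₀ c₀ := dist_pos.2 hac
    positivity

set_option maxHeartbeats 2000000 in
/-- first variation of arc length with two variable endpoints in an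
Alexandrov space.  Let `γ₁, γ₂ : [0,T] → X` be unit-speed geodesics starting at
`p` and `q`, for each `t` let `σ t : [0,1] → X` be a shortest path from `γ₁ t`
to `γ₂ t`, and suppose `σ (tᵢ) → σ₀` (pointwise) along a sequence `tᵢ → 0⁺`.
If `αᵢ` is the angle made by `σ₀` with `γᵢ` (realized as the limit of the
comparison angles), then `(ℓ(tᵢ) − ℓ(0))/tᵢ → −cos α₁ − cos α₂` where
`ℓ(t) = d(γ₁ t, γ₂ t)`. -/
theorem first_variation_two_endpoints
    {X : Type*} [MetricSpace X] (hX : AlexandrovCurvNonneg X)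
    (T : ℝ) (hT : 0 < T) (γ₁ γ₂ : ℝ → X) (p q : X) (hpq : p ≠ q)
    (hγ₁0 : γ₁ 0 = p) (hγ₂0 : γ₂ 0 = q)
    (hγ₁ : ∀ s ∈ Set.Icc (0:ℝ) T, ∀ t ∈ Set.Icc (0:ℝ) T,
      dist (γ₁ s) (γ₁ t) = |s - t|)
    (hγ₂ : ∀ s ∈ Set.Icc (0:ℝ) T, ∀ t ∈ Set.Icc (0:ℝ) T,
      dist (γ₂ s) (γ₂ t) = |s - t|)
    (σ : ℝ → ℝ → X) (σ₀ : ℝ → X)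
    (hσ_src : ∀ t ∈ Set.Icc (0:ℝ) T, σ t 0 = γ₁ t)
    (hσ_tgt : ∀ t ∈ Set.Icc (0:ℝ) T, σ t 1 = γ₂ t)
    (hσ_min : ∀ t ∈ Set.Icc (0:ℝ) T, ∀ u ∈ Set.Icc (0:ℝ) 1, ∀ w ∈ Set.Icc (0:ℝ) 1,
      dist (σ t u) (σ t w) = dist (γ₁ t) (γ₂ t) * |u - w|)
    (ti : ℕ → ℝ) (hti_pos : ∀ i, 0 < ti i) (hti_le : ∀ i, ti i ≤ T)
    (hti_lim : Tendsto ti atTop (𝓝 0))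
    (hσ_lim : ∀ u ∈ Set.Icc (0:ℝ) 1, Tendsto (fun i => σ (ti i) u) atTop (𝓝 (σ₀ u)))
    (α₁ α₂ : ℝ)
    (hα₁ : Tendsto (fun su : ℝ × ℝ => compAngle p (σ₀ su.1) (γ₁ su.2))
      ((𝓝[>] (0:ℝ)) ×ˢ (𝓝[>] (0:ℝ))) (𝓝 α₁))
    (hα₂ : Tendsto (fun su : ℝ × ℝ => compAngle q (σ₀ (1 - su.1)) (γ₂ su.2))
      ((𝓝[>] (0:ℝ)) ×ˢ (𝓝[>] (0:ℝ))) (𝓝 α₂)) :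
    Tendsto (fun i => (dist (γ₁ (ti i)) (γ₂ (ti i)) - dist p q) / ti i)
      atTop (𝓝 (-Real.cos α₁ - Real.cos α₂)) := by
  have hℓ₀ : 0 < dist p q := dist_pos.2 hpq
  have h0T : (0:ℝ) ∈ Set.Icc (0:ℝ) T := ⟨le_refl 0, hT.le⟩
  have hti_mem : ∀ i, ti i ∈ Set.Icc (0:ℝ) T := fun i => ⟨(hti_pos i).le, hti_le i⟩
  have hγ₁p : ∀ t ∈ Set.Icc (0:ℝ) T, dist (γ₁ t) p = t := by
    intro t htm
    rw [← hγ₁0, hγ₁ t htm 0 h0T, sub_zero, abs_of_nonneg htm.1]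
  have hγ₂q : ∀ t ∈ Set.Icc (0:ℝ) T, dist (γ₂ t) q = t := by
    intro t htm
    rw [← hγ₂0, hγ₂ t htm 0 h0T, sub_zero, abs_of_nonneg htm.1]
  have hγ₁lim : Tendsto (fun i => γ₁ (ti i)) atTop (𝓝 p) := by
    rw [tendsto_iff_dist_tendsto_zero]
    exact hti_lim.congr fun i => (hγ₁p (ti i) (hti_mem i)).symm
  have hγ₂lim : Tendsto (fun i => γ₂ (ti i)) atTop (𝓝 q) := by
    rw [tendsto_iff_dist_tendsto_zero]
    exact hti_lim.congr fun i => (hγ₂q (ti i) (hti_mem i)).symm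
  have hℓlim : Tendsto (fun i => dist (γ₁ (ti i)) (γ₂ (ti i))) atTop (𝓝 (dist p q)) :=
    hγ₁lim.dist hγ₂lim
  have hσ₀dist : ∀ u ∈ Set.Icc (0:ℝ) 1, ∀ w ∈ Set.Icc (0:ℝ) 1,
      dist (σ₀ u) (σ₀ w) = dist p q * |u - w| := by
    intro u hu w hw
    refine tendsto_nhds_unique ((hσ_lim u hu).dist (hσ_lim w hw)) ?_
    exact (hℓlim.mul_const _).congr fun i => (hσ_min (ti i) (hti_mem i) u hu w hw).symm
  have hσ₀0 : σ₀ 0 = p := tendsto_nhds_unique (hσ_lim 0 ⟨le_refl 0, zero_le_one⟩)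
    (hγ₁lim.congr fun i => (hσ_src (ti i) (hti_mem i)).symm)
  have hσ₀1 : σ₀ 1 = q := tendsto_nhds_unique (hσ_lim 1 ⟨zero_le_one, le_refl 1⟩)
    (hγ₂lim.congr fun i => (hσ_tgt (ti i) (hti_mem i)).symm)
  rw [Metric.tendsto_nhds]
  intro ε hε
  have hcos1 : ∀ᶠ su : ℝ × ℝ in (𝓝[>] (0:ℝ)) ×ˢ (𝓝[>] (0:ℝ)),
      |Real.cos (compAngle p (σ₀ su.1) (γ₁ su.2)) - Real.cos α₁| < ε/8 := by
    have h := (Real.continuous_cos.tendsto α₁).comp hα₁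
    have h2 := Metric.tendsto_nhds.1 h (ε/8) (by positivity)
    simpa [Real.dist_eq, Function.comp] using h2
  have hcos2 : ∀ᶠ su : ℝ × ℝ in (𝓝[>] (0:ℝ)) ×ˢ (𝓝[>] (0:ℝ)),
      |Real.cos (compAngle q (σ₀ (1 - su.1)) (γ₂ su.2)) - Real.cos α₂| < ε/8 := by
    have h := (Real.continuous_cos.tendsto α₂).comp hα₂
    have h2 := Metric.tendsto_nhds.1 h (ε/8) (by positivity)
    simpa [Real.dist_eq, Function.comp] using h2
  rw [eventually_prod_iff] at hcos1 hcos2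
  obtain ⟨P1, hP1, Q1, hQ1, H1⟩ := hcos1
  obtain ⟨P2, hP2, Q2, hQ2, H2⟩ := hcos2
  obtain ⟨δ1a, hδ1a, hδ1as⟩ := mem_nhdsGT_iff_exists_Ioo_subset.1 hP1
  obtain ⟨δ1b, hδ1b, hδ1bs⟩ := mem_nhdsGT_iff_exists_Ioo_subset.1 hQ1
  obtain ⟨δ2a, hδ2a, hδ2as⟩ := mem_nhdsGT_iff_exists_Ioo_subset.1 hP2
  obtain ⟨δ2b, hδ2b, hδ2bs⟩ := mem_nhdsGT_iff_exists_Ioo_subset.1 hQ2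
  rw [Set.mem_Ioi] at hδ1a hδ1b hδ2a hδ2b
  obtain ⟨c, hc0, hcd1a, hcd2a, hcd1b, hcd2b, hc1, hcT4⟩ :
      ∃ c : ℝ, 0 < c ∧ c < δ1a ∧ c < δ2a ∧ c < δ1b ∧ c < δ2b ∧ 4*c ≤ 1 ∧ 4*c ≤ T := by
    refine ⟨min (min δ1a δ2a) (min (min δ1b δ2b) (min 1 T)) / 4, ?_, ?_, ?_, ?_, ?_, ?_, ?_⟩
    · have := lt_min (lt_min hδ1a hδ2a) (lt_min (lt_min hδ1b hδ2b) (lt_min one_pos hT))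
      linarith
    · have h1 : min (min δ1a δ2a) (min (min δ1b δ2b) (min 1 T)) ≤ δ1a :=
        le_trans (min_le_left _ _) (min_le_left _ _)
      linarith
    · have h1 : min (min δ1a δ2a) (min (min δ1b δ2b) (min 1 T)) ≤ δ2a :=
        le_trans (min_le_left _ _) (min_le_right _ _)
      linarith
    · have h1 : min (min δ1a δ2a) (min (min δ1b δ2b) (min 1 T)) ≤ δ1b :=
        le_trans (min_le_right _ _) (le_trans (min_le_left _ _) (min_le_left _ _))
      linarith
    · have h1 : min (min δ1a δ2a) (min (min δ1b δ2b) (min 1 T)) ≤ δ2b :=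
        le_trans (min_le_right _ _) (le_trans (min_le_left _ _) (min_le_right _ _))
      linarith
    · have h1 : min (min δ1a δ2a) (min (min δ1b δ2b) (min 1 T)) ≤ 1 :=
        le_trans (min_le_right _ _) (le_trans (min_le_right _ _) (min_le_left _ _))
      linarith
    · have h1 : min (min δ1a δ2a) (min (min δ1b δ2b) (min 1 T)) ≤ T :=
        le_trans (min_le_right _ _) (le_trans (min_le_right _ _) (min_le_right _ _))
      linarith
  have hc01 : c ∈ Set.Icc (0:ℝ) 1 := ⟨hc0.le, by linarith⟩
  have h1c01 : (1 - c) ∈ Set.Icc (0:ℝ) 1 := ⟨by linarith, by linarith⟩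
  have hcT : c ∈ Set.Icc (0:ℝ) T := ⟨hc0.le, by linarith⟩
  -- distances along σ₀
  have hpσc : dist p (σ₀ c) = dist p q * c := by
    have h := hσ₀dist 0 ⟨le_refl 0, zero_le_one⟩ c hc01
    rw [hσ₀0] at h
    rw [h, zero_sub, abs_neg, abs_of_nonneg hc0.le]
  have hqσc : dist q (σ₀ (1 - c)) = dist p q * c := by
    have h := hσ₀dist 1 ⟨zero_le_one, le_refl 1⟩ (1 - c) h1c01
    rw [hσ₀1] at h
    rw [h, show (1:ℝ) - (1 - c) = c by ring, abs_of_nonneg hc0.le]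
  have hmidσ : dist (σ₀ c) (σ₀ (1 - c)) = dist p q * (1 - 2*c) := by
    rw [hσ₀dist c hc01 (1 - c) h1c01, show c - (1 - c) = -(1 - 2*c) by ring, abs_neg,
      abs_of_nonneg (by linarith)]
  -- nondegeneracy at limit points
  have hpne_σc : p ≠ σ₀ c := dist_pos.1 (by rw [hpσc]; positivity)
  have hpne_γc : p ≠ γ₁ c := dist_pos.1 (by rw [dist_comm p (γ₁ c), hγ₁p c hcT]; exact hc0)
  have hqne_σc : q ≠ σ₀ (1 - c) := dist_pos.1 (by rw [hqσc]; positivity)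
  have hqne_γc : q ≠ γ₂ c := dist_pos.1 (by rw [dist_comm q (γ₂ c), hγ₂q c hcT]; exact hc0)
  -- the tilde angle bounds at (c, c)
  have hcA1 : |Real.cos (compAngle p (σ₀ c) (γ₁ c)) - Real.cos α₁| < ε/8 := by
    simpa using H1 (hδ1as ⟨hc0, hcd1a⟩) (hδ1bs ⟨hc0, hcd1b⟩)
  have hcA2 : |Real.cos (compAngle q (σ₀ (1 - c)) (γ₂ c)) - Real.cos α₂| < ε/8 := by
    simpa using H2 (hδ2as ⟨hc0, hcd2a⟩) (hδ2bs ⟨hc0, hcd2b⟩)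
  -- limits of the comparison cosines appearing in the lower bound
  have hBlim1 : Tendsto (fun i => compCos (γ₁ (ti i)) (σ (ti i) c) (γ₁ c)) atTop
      (𝓝 (Real.cos (compAngle p (σ₀ c) (γ₁ c)))) := by
    rw [cos_compAngle hpne_σc hpne_γc]
    exact compCos_tendsto hγ₁lim (hσ_lim c hc01) tendsto_const_nhds hpne_σc hpne_γc
  have hBlim2 : Tendsto (fun i => compCos (γ₂ (ti i)) (σ (ti i) (1 - c)) (γ₂ c)) atTop
      (𝓝 (Real.cos (compAngle q (σ₀ (1 - c)) (γ₂ c)))) := by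
    rw [cos_compAngle hqne_σc hqne_γc]
    exact compCos_tendsto hγ₂lim (hσ_lim (1 - c) h1c01) tendsto_const_nhds hqne_σc hqne_γc
  have hBev1 : ∀ᶠ i in atTop, |compCos (γ₁ (ti i)) (σ (ti i) c) (γ₁ c)
      - Real.cos (compAngle p (σ₀ c) (γ₁ c))| < ε/8 := by
    have h2 := Metric.tendsto_nhds.1 hBlim1 (ε/8) (by positivity)
    simpa [Real.dist_eq] using h2
  have hBev2 : ∀ᶠ i in atTop, |compCos (γ₂ (ti i)) (σ (ti i) (1 - c)) (γ₂ c)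
      - Real.cos (compAngle q (σ₀ (1 - c)) (γ₂ c))| < ε/8 := by
    have h2 := Metric.tendsto_nhds.1 hBlim2 (ε/8) (by positivity)
    simpa [Real.dist_eq] using h2
  have hsmall : ∀ᶠ i in atTop,
      ti i < min c (min (ε * (dist p q * c) / 16) (dist p q / 8)) :=
    hti_lim.eventually_lt_const (by positivity)
  filter_upwards [hsmall, hBev1, hBev2] with i hsm hB1 hB2
  set t := ti i with htdef
  have ht0 : 0 < t := hti_pos i
  have htT : t ∈ Set.Icc (0:ℝ) T := hti_mem i
  have htc : t < c := lt_of_lt_of_le hsm (min_le_left _ _)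
  have htε : t ≤ ε * (dist p q * c) / 16 :=
    le_of_lt (lt_of_lt_of_le hsm (le_trans (min_le_right _ _) (min_le_left _ _)))
  have htℓ : t ≤ dist p q / 8 :=
    le_of_lt (lt_of_lt_of_le hsm (le_trans (min_le_right _ _) (min_le_right _ _)))
  set ℓt := dist (γ₁ t) (γ₂ t) with hℓtdef
  have hℓt_ge : dist p q / 2 ≤ ℓt := by
    have h4 := dist_triangle4 p (γ₁ t) (γ₂ t) q
    rw [dist_comm p (γ₁ t), hγ₁p t htT, hγ₂q t htT] at h4
    linarith
  have hℓt0 : 0 < ℓt := by linarith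
  have hdpγt : dist p (γ₁ t) = t := by rw [dist_comm]; exact hγ₁p t htT
  have hdqγt : dist q (γ₂ t) = t := by rw [dist_comm]; exact hγ₂q t htT
  have hpne_γt : p ≠ γ₁ t := dist_pos.1 (by rw [hdpγt]; exact ht0)
  have hqne_γt : q ≠ γ₂ t := dist_pos.1 (by rw [hdqγt]; exact ht0)
  -- error bounds
  have herrU : t ^ 2 / (2 * (dist p q * c)) ≤ t * (ε/16) := by
    rw [div_le_iff₀ (by positivity)]
    have h1 := mul_le_mul_of_nonneg_left htε ht0.le
    have h2 : (0:ℝ) ≤ t * (ε * (dist p q * c) / 16) := by positivity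
    linarith
  have herrL : t ^ 2 / (2 * (ℓt * c)) ≤ t * (ε/16) := by
    rw [div_le_iff₀ (by positivity)]
    have h1 := mul_le_mul_of_nonneg_left htε ht0.le
    have h2 : (0:ℝ) ≤ (2 * ℓt - dist p q) * (t * ε * c / 16) :=
      mul_nonneg (by linarith) (by positivity)
    linarith
  ---- UPPER BOUND ----
  have hUB1 : dist (σ₀ c) (γ₁ t) ≤ dist p q * c
      - t * Real.cos (compAngle p (σ₀ c) (γ₁ t)) + t * (ε/16) := by
    have h := key_est hpne_σc hpne_γt
    rw [hpσc, hdpγt] at h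
    exact le_trans h (by linarith [herrU])
  have hUB2 : dist (σ₀ (1 - c)) (γ₂ t) ≤ dist p q * c
      - t * Real.cos (compAngle q (σ₀ (1 - c)) (γ₂ t)) + t * (ε/16) := by
    have h := key_est hqne_σc hqne_γt
    rw [hqσc, hdqγt] at h
    exact le_trans h (by linarith [herrU])
  have hcosU1 : |Real.cos (compAngle p (σ₀ c) (γ₁ t)) - Real.cos α₁| < ε/8 := by
    simpa using H1 (hδ1as ⟨hc0, hcd1a⟩) (hδ1bs ⟨ht0, by linarith⟩)
  have hcosU2 : |Real.cos (compAngle q (σ₀ (1 - c)) (γ₂ t)) - Real.cos α₂| < ε/8 := by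
    simpa using H2 (hδ2as ⟨hc0, hcd2a⟩) (hδ2bs ⟨ht0, by linarith⟩)
  have e1 : t * (Real.cos α₁ - ε/8) ≤ t * Real.cos (compAngle p (σ₀ c) (γ₁ t)) :=
    mul_le_mul_of_nonneg_left (by linarith [abs_lt.1 hcosU1]) ht0.le
  have e2 : t * (Real.cos α₂ - ε/8) ≤ t * Real.cos (compAngle q (σ₀ (1 - c)) (γ₂ t)) :=
    mul_le_mul_of_nonneg_left (by linarith [abs_lt.1 hcosU2]) ht0.le
  have hchainU := dist_triangle4 (γ₁ t) (σ₀ c) (σ₀ (1 - c)) (γ₂ t)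
  rw [dist_comm (γ₁ t) (σ₀ c), hmidσ] at hchainU
  have hup : ℓt - dist p q ≤ t * (-Real.cos α₁ - Real.cos α₂ + ε/2) := by
    have h2 : (0:ℝ) ≤ t * ε := mul_nonneg ht0.le hε.le
    linarith [hchainU, hUB1, hUB2, e1, e2]
  ---- LOWER BOUND ----
  -- endpoint 1
  have hdγσ : dist (γ₁ t) (σ t c) = ℓt * c := by
    have h := hσ_min t htT 0 ⟨le_refl 0, zero_le_one⟩ c hc01
    rw [hσ_src t htT] at h
    rw [h, zero_sub, abs_neg, abs_of_nonneg hc0.le]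
  have hne_tσ : γ₁ t ≠ σ t c := dist_pos.1 (by rw [hdγσ]; positivity)
  have hne_tp : γ₁ t ≠ p := dist_pos.1 (by rw [hγ₁p t htT]; exact ht0)
  have hdγγ : dist (γ₁ t) (γ₁ c) = c - t := by
    rw [hγ₁ t htT c hcT, abs_of_nonpos (by linarith)]; ring
  have hne_tc : γ₁ t ≠ γ₁ c := dist_pos.1 (by rw [hdγγ]; linarith)
  have hstraight1 : compAngle (γ₁ t) (γ₁ c) p = π := by
    have hcc : compCos (γ₁ t) (γ₁ c) p = -1 := by
      unfold compCos
      rw [hdγγ, hγ₁p t htT, hγ₁p c hcT]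
      rw [div_eq_iff (ne_of_gt (mul_pos (mul_pos two_pos (by linarith)) ht0))]
      ring
    rw [compAngle, hcc, Real.arccos_neg_one]
  have hXineq1 := hX (γ₁ t) p (σ t c) (γ₁ c) hne_tp hne_tσ hne_tc
  rw [hstraight1] at hXineq1
  have hcosA1 : -Real.cos (compAngle (γ₁ t) (σ t c) (γ₁ c))
      ≤ Real.cos (compAngle (γ₁ t) p (σ t c)) := by
    have hB0 : 0 ≤ compAngle (γ₁ t) (σ t c) (γ₁ c) := Real.arccos_nonneg _
    have h1 : compAngle (γ₁ t) p (σ t c) ≤ π - compAngle (γ₁ t) (σ t c) (γ₁ c) := by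
      linarith
    have h2 := Real.cos_le_cos_of_nonneg_of_le_pi (Real.arccos_nonneg _)
      (by linarith : π - compAngle (γ₁ t) (σ t c) (γ₁ c) ≤ π) h1
    rwa [Real.cos_pi_sub] at h2
  have hcosB1 : Real.cos (compAngle (γ₁ t) (σ t c) (γ₁ c))
      = compCos (γ₁ t) (σ t c) (γ₁ c) := cos_compAngle hne_tσ hne_tc
  have hLB1 : dist (σ t c) p ≤ ℓt * c
      - t * Real.cos (compAngle (γ₁ t) p (σ t c)) + t * (ε/16) := by
    have h := key_est hne_tσ hne_tp
    rw [hdγσ, hγ₁p t htT, compAngle_comm (γ₁ t) (σ t c) p] at h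
    exact le_trans h (by linarith [herrL])
  -- endpoint 2
  have hdγσ2 : dist (γ₂ t) (σ t (1 - c)) = ℓt * c := by
    have h := hσ_min t htT 1 ⟨zero_le_one, le_refl 1⟩ (1 - c) h1c01
    rw [hσ_tgt t htT] at h
    rw [h, show (1:ℝ) - (1 - c) = c by ring, abs_of_nonneg hc0.le]
  have hne_tσ2 : γ₂ t ≠ σ t (1 - c) := dist_pos.1 (by rw [hdγσ2]; positivity)
  have hne_tq : γ₂ t ≠ q := dist_pos.1 (by rw [hγ₂q t htT]; exact ht0)
  have hdγγ2 : dist (γ₂ t) (γ₂ c) = c - t := by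
    rw [hγ₂ t htT c hcT, abs_of_nonpos (by linarith)]; ring
  have hne_tc2 : γ₂ t ≠ γ₂ c := dist_pos.1 (by rw [hdγγ2]; linarith)
  have hstraight2 : compAngle (γ₂ t) (γ₂ c) q = π := by
    have hcc : compCos (γ₂ t) (γ₂ c) q = -1 := by
      unfold compCos
      rw [hdγγ2, hγ₂q t htT, hγ₂q c hcT]
      rw [div_eq_iff (ne_of_gt (mul_pos (mul_pos two_pos (by linarith)) ht0))]
      ring
    rw [compAngle, hcc, Real.arccos_neg_one]
  have hXineq2 := hX (γ₂ t) q (σ t (1 - c)) (γ₂ c) hne_tq hne_tσ2 hne_tc2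
  rw [hstraight2] at hXineq2
  have hcosA2 : -Real.cos (compAngle (γ₂ t) (σ t (1 - c)) (γ₂ c))
      ≤ Real.cos (compAngle (γ₂ t) q (σ t (1 - c))) := by
    have hB0 : 0 ≤ compAngle (γ₂ t) (σ t (1 - c)) (γ₂ c) := Real.arccos_nonneg _
    have h1 : compAngle (γ₂ t) q (σ t (1 - c))
        ≤ π - compAngle (γ₂ t) (σ t (1 - c)) (γ₂ c) := by linarith
    have h2 := Real.cos_le_cos_of_nonneg_of_le_pi (Real.arccos_nonneg _)
      (by linarith : π - compAngle (γ₂ t) (σ t (1 - c)) (γ₂ c) ≤ π) h1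
    rwa [Real.cos_pi_sub] at h2
  have hcosB2 : Real.cos (compAngle (γ₂ t) (σ t (1 - c)) (γ₂ c))
      = compCos (γ₂ t) (σ t (1 - c)) (γ₂ c) := cos_compAngle hne_tσ2 hne_tc2
  have hLB2 : dist (σ t (1 - c)) q ≤ ℓt * c
      - t * Real.cos (compAngle (γ₂ t) q (σ t (1 - c))) + t * (ε/16) := by
    have h := key_est hne_tσ2 hne_tq
    rw [hdγσ2, hγ₂q t htT, compAngle_comm (γ₂ t) (σ t (1 - c)) q] at h
    exact le_trans h (by linarith [herrL])
  -- cos A ≥ -cos α - ε/4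
  have hgA1 : -Real.cos α₁ - ε/4 ≤ Real.cos (compAngle (γ₁ t) p (σ t c)) := by
    have h1 := abs_lt.1 hB1
    have h2 := abs_lt.1 hcA1
    rw [hcosB1] at hcosA1
    linarith
  have hgA2 : -Real.cos α₂ - ε/4 ≤ Real.cos (compAngle (γ₂ t) q (σ t (1 - c))) := by
    have h1 := abs_lt.1 hB2
    have h2 := abs_lt.1 hcA2
    rw [hcosB2] at hcosA2
    linarith
  have e3 : t * (-Real.cos α₁ - ε/4) ≤ t * Real.cos (compAngle (γ₁ t) p (σ t c)) :=
    mul_le_mul_of_nonneg_left hgA1 ht0.le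
  have e4 : t * (-Real.cos α₂ - ε/4) ≤ t * Real.cos (compAngle (γ₂ t) q (σ t (1 - c))) :=
    mul_le_mul_of_nonneg_left hgA2 ht0.le
  have hmidt : dist (σ t c) (σ t (1 - c)) = ℓt * (1 - 2*c) := by
    rw [hσ_min t htT c hc01 (1 - c) h1c01, show c - (1 - c) = -(1 - 2*c) by ring, abs_neg,
      abs_of_nonneg (by linarith)]
  have hchainL := dist_triangle4 p (σ t c) (σ t (1 - c)) q
  rw [dist_comm p (σ t c), hmidt] at hchainL
  have hlow : t * (-Real.cos α₁ - Real.cos α₂ - 5*ε/8) ≤ ℓt - dist p q := by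
    linarith [hchainL, hLB1, hLB2, e3, e4]
  ---- CONCLUSION ----
  rw [Real.dist_eq]
  have hQU : (ℓt - dist p q) / t ≤ -Real.cos α₁ - Real.cos α₂ + ε/2 := by
    rw [div_le_iff₀ ht0]
    linarith [hup]
  have hQL : -Real.cos α₁ - Real.cos α₂ - 5*ε/8 ≤ (ℓt - dist p q) / t := by
    rw [le_div_iff₀ ht0]
    linarith [hlow]
  rw [abs_lt]
  constructor <;> linarith
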